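/- Let |M^o_{k,d}| and |M^e_{k,d}| count tuples (m; k₁,…,k_n; l₁,…,l_n) with m ≥ 0, 0 ≤ n, m + k₁+⋯+k_n = k, k_u ≥ 2, l_u ≥ 0, k_u - 1 - l_u ≥ 1 for all u, and Σ_u(k_u - 1 - l_u) ≤ d with that sum odd (resp. even). Then |M^o_{k,d}| = |M^o_{k-1,d}| + |M^e_{k-1,d-1}| and |M^e_{k,d}| = |M^e_{k-1,d}| + |M^o_{k-1,d-1}| for k ≥ 2, d ≥ 1, and consequently |M^o_{k,k}| = |M^e_{k,k}| = 2^{k-2} for all k ≥ 2. -/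

import Mathlib

namespace Stmt18Aux

abbrev X := ℕ × List (ℕ × ℕ)

def sval (L : List (ℕ × ℕ)) : ℕ := (L.map fun p => p.1 - 1 - p.2).sum

@[simp] lemma sval_nil : sval [] = 0 := rfl
@[simp] lemma sval_cons (a b : ℕ) (L : List (ℕ × ℕ)) :
    sval ((a, b) :: L) = (a - 1 - b) + sval L := by simp [sval]

def Pred (k d : ℕ) (P : X) : Prop :=
  P.1 + (P.2.map Prod.fst).sum = k ∧ (∀ p ∈ P.2, p.2 + 2 ≤ p.1) ∧ sval P.2 ≤ d

lemma sval_le (L : List (ℕ × ℕ)) : sval L ≤ (L.map Prod.fst).sum := by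
  induction L with
  | nil => simp
  | cons p T ih => obtain ⟨a, b⟩ := p; simp; omega

lemma bound (L : List (ℕ × ℕ)) (hL : ∀ p ∈ L, p.2 + 2 ≤ p.1) :
    L.length ≤ (L.map Prod.fst).sum ∧
      ∀ p ∈ L, p.1 ≤ (L.map Prod.fst).sum ∧ p.2 ≤ (L.map Prod.fst).sum := by
  induction L with
  | nil => simp
  | cons q T ih =>
    obtain ⟨h1, h2⟩ := ih (fun p hp => hL p (List.mem_cons_of_mem _ hp))
    have hq := hL q (List.mem_cons_self)
    refine ⟨by simp; omega, ?_⟩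
    intro p hp
    rcases List.mem_cons.mp hp with rfl | hp
    · simp; omega
    · have := h2 p hp; simp; omega

lemma listSet_finite (n : ℕ) :
    {l : List (ℕ × ℕ) | l.length ≤ n ∧ ∀ p ∈ l, p.1 ≤ n ∧ p.2 ≤ n}.Finite := by
  have h := List.finite_length_le (Fin (n + 1) × Fin (n + 1)) n
  refine (h.image (List.map fun q => ((q.1 : ℕ), (q.2 : ℕ)))).subset ?_
  rintro l ⟨h1, h2⟩
  refine ⟨l.attach.map (fun x =>
      (⟨x.1.1, by have := h2 x.1 x.2; omega⟩, ⟨x.1.2, by have := h2 x.1 x.2; omega⟩)), by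
    simpa using h1, ?_⟩
  rw [List.map_map]
  conv_rhs => rw [← List.attach_map_subtype_val l]
  rfl

instance pred_finite (k d : ℕ) (q : ℕ → Prop) :
    Finite {P : X // Pred k d P ∧ q (sval P.2)} := by
  have hsub : {P : X | Pred k d P ∧ q (sval P.2)} ⊆
      (Set.Iic k) ×ˢ {l : List (ℕ × ℕ) | l.length ≤ k ∧ ∀ p ∈ l, p.1 ≤ k ∧ p.2 ≤ k} := by
    rintro ⟨m, L⟩ ⟨⟨h1, h2, h3⟩, -⟩
    obtain ⟨hb1, hb2⟩ := bound L h2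
    simp only at h1
    refine ⟨by simp; omega, ⟨by simp only; omega, ?_⟩⟩
    intro p hp; have := hb2 p hp; omega
  have := ((((Set.finite_Iic k).prod (listSet_finite k)).subset hsub)).to_subtype
  exact this


lemma card_split {α : Type*} (p r : α → Prop) [Finite {x // p x}] :
    Nat.card {x // p x} =
      Nat.card {x // p x ∧ r x} + Nat.card {x // p x ∧ ¬ r x} := by
  classical
  have e0 : {x // p x} ≃ {y : {x // p x} // r y.1} ⊕ {y : {x // p x} // ¬ r y.1} :=
    (Equiv.sumCompl _).symm
  have e1 : {y : {x // p x} // r y.1} ≃ {x // p x ∧ r x} :=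
    Equiv.subtypeSubtypeEquivSubtypeInter p r
  have e2 : {y : {x // p x} // ¬ r y.1} ≃ {x // p x ∧ ¬ r x} :=
    Equiv.subtypeSubtypeEquivSubtypeInter p (fun x => ¬ r x)
  rw [Nat.card_congr e0, Nat.card_sum, Nat.card_congr e1, Nat.card_congr e2]

section Rec

variable (k d : ℕ) (q q' : ℕ → Prop)

lemma cardA (hk : 1 ≤ k) :
    Nat.card {P : X // (Pred k d P ∧ q (sval P.2)) ∧ 1 ≤ P.1} =
      Nat.card {P : X // Pred (k - 1) d P ∧ q (sval P.2)} := by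
  refine Nat.card_congr ⟨fun P => ⟨(P.1.1 - 1, P.1.2), ?_⟩, fun P => ⟨(P.1.1 + 1, P.1.2), ?_⟩, ?_, ?_⟩
  · obtain ⟨⟨m, L⟩, ⟨⟨h1, h2, h3⟩, h4⟩, h5⟩ := P
    dsimp only at h1 h5
    refine ⟨⟨?_, h2, h3⟩, h4⟩
    show m - 1 + (List.map Prod.fst L).sum = k - 1
    omega
  · obtain ⟨⟨m, L⟩, ⟨h1, h2, h3⟩, h4⟩ := P
    dsimp only at h1
    refine ⟨⟨⟨?_, h2, h3⟩, h4⟩, ?_⟩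
    · show m + 1 + (List.map Prod.fst L).sum = k
      omega
    · show 1 ≤ m + 1
      omega
  · rintro ⟨⟨m, L⟩, ⟨⟨h1, h2, h3⟩, h4⟩, h5⟩
    simp only at h5
    exact Subtype.ext (by simp only; rw [Nat.sub_add_cancel h5])
  · rintro ⟨⟨m, L⟩, ⟨h1, h2, h3⟩, h4⟩
    exact Subtype.ext (by simp only; rw [Nat.add_sub_cancel])

/-- the raw map for the `m = 0` part -/
def f2 : X → X
  | (_, []) => (0, [])
  | (_, (a, b) :: T) => if b + 3 ≤ a then (0, (a - 1, b) :: T) else (a - 1, T)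

@[simp] lemma f2_cons (m a b : ℕ) (T : List (ℕ × ℕ)) :
    f2 (m, (a, b) :: T) = if b + 3 ≤ a then (0, (a - 1, b) :: T) else (a - 1, T) := rfl

variable (hq : ∀ n, q (n + 1) ↔ q' n) (hk : 2 ≤ k) (hd : 1 ≤ d)

include hq hk hd in
lemma f2_maps : ∀ P : X, (Pred k d P ∧ q (sval P.2)) ∧ ¬ 1 ≤ P.1 →
    Pred (k - 1) (d - 1) (f2 P) ∧ q' (sval (f2 P).2) := by
  rintro ⟨m, L⟩ ⟨⟨⟨h1, h2, h3⟩, h4⟩, h5⟩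
  simp only at h1 h5
  have hm : m = 0 := by omega
  subst hm
  cases L with
  | nil => exfalso; simp at h1; omega
  | cons p T =>
    obtain ⟨a, b⟩ := p
    have hab2 : b + 2 ≤ a := h2 (a, b) (List.mem_cons_self)
    have hsv : sval ((a, b) :: T) = (a - 1 - b) + sval T := sval_cons a b T
    by_cases hab : b + 3 ≤ a
    · rw [f2_cons, if_pos hab]
      simp only [List.map_cons, List.sum_cons] at h1
      refine ⟨⟨?_, ?_, ?_⟩, ?_⟩
      · show 0 + (a - 1 + (List.map Prod.fst T).sum) = k - 1
        omega
      · intro p hp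
        rcases List.mem_cons.mp hp with rfl | hp
        · simp only; omega
        · exact h2 p (List.mem_cons_of_mem _ hp)
      · show sval ((a - 1, b) :: T) ≤ d - 1
        rw [sval_cons] at h3 ⊢; omega
      · show q' (sval ((a - 1, b) :: T))
        have key : sval ((a, b) :: T) = sval ((a - 1, b) :: T) + 1 := by
          rw [sval_cons, sval_cons]; omega
        rw [key] at h4
        exact (hq _).mp h4
    · rw [f2_cons, if_neg hab]
      simp only [List.map_cons, List.sum_cons] at h1
      refine ⟨⟨?_, fun p hp => h2 p (List.mem_cons_of_mem _ hp), ?_⟩, ?_⟩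
      · show a - 1 + (List.map Prod.fst T).sum = k - 1
        omega
      · show sval T ≤ d - 1
        rw [sval_cons] at h3; omega
      · show q' (sval T)
        have key : sval ((a, b) :: T) = sval T + 1 := by rw [sval_cons]; omega
        rw [key] at h4
        exact (hq _).mp h4

include hq hk hd in
lemma cardB :
    Nat.card {P : X // (Pred k d P ∧ q (sval P.2)) ∧ ¬ 1 ≤ P.1} =
      Nat.card {P : X // Pred (k - 1) (d - 1) P ∧ q' (sval P.2)} := by
  refine Nat.card_congr (Equiv.ofBijective
    (fun P => ⟨f2 P.1, f2_maps k d q q' hq hk hd P.1 P.2⟩) ⟨?_, ?_⟩)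
  · rintro ⟨⟨m1, L1⟩, ⟨⟨h11, h12, h13⟩, h14⟩, h15⟩ ⟨⟨m2, L2⟩, ⟨⟨h21, h22, h23⟩, h24⟩, h25⟩ heq
    simp only at h11 h15 h21 h25
    have hm1 : m1 = 0 := by omega
    have hm2 : m2 = 0 := by omega
    subst hm1; subst hm2
    rw [Subtype.mk.injEq] at heq ⊢
    cases L1 with
    | nil => exfalso; simp at h11; omega
    | cons p1 T1 =>
    cases L2 with
    | nil => exfalso; simp at h21; omega
    | cons p2 T2 =>
    obtain ⟨a1, b1⟩ := p1
    obtain ⟨a2, b2⟩ := p2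
    have hab1 : b1 + 2 ≤ a1 := h12 _ (List.mem_cons_self)
    have hab2 : b2 + 2 ≤ a2 := h22 _ (List.mem_cons_self)
    rw [f2_cons, f2_cons] at heq
    split_ifs at heq with c1 c2 c2
    · simp only [Prod.mk.injEq, List.cons.injEq] at heq
      obtain ⟨-, ⟨e1, e2⟩, e3⟩ := heq
      have ha : a1 = a2 := by omega
      subst ha; subst e2; subst e3; rfl
    · exfalso
      simp only [Prod.mk.injEq] at heq
      omega
    · exfalso
      simp only [Prod.mk.injEq] at heq
      omega
    · simp only [Prod.mk.injEq] at heq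
      obtain ⟨e1, e2⟩ := heq
      have ha : a1 = a2 := by omega
      have hb : b1 = b2 := by omega
      subst ha; subst hb; subst e2; rfl
  · rintro ⟨⟨m, L⟩, ⟨h1, h2, h3⟩, h4⟩
    simp only at h1
    cases m with
    | zero =>
      cases L with
      | nil => exfalso; simp at h1; omega
      | cons p T =>
        obtain ⟨a, b⟩ := p
        have hab : b + 2 ≤ a := h2 _ (List.mem_cons_self)
        simp only [List.map_cons, List.sum_cons] at h1
        refine ⟨⟨(0, (a + 1, b) :: T), ⟨⟨⟨?_, ?_, ?_⟩, ?_⟩, by omega⟩⟩, ?_⟩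
        · show 0 + (a + 1 + (List.map Prod.fst T).sum) = k
          omega
        · intro p hp
          rcases List.mem_cons.mp hp with rfl | hp
          · simp only; omega
          · exact h2 p (List.mem_cons_of_mem _ hp)
        · show sval ((a + 1, b) :: T) ≤ d
          rw [sval_cons] at h3 ⊢
          omega
        · show q (sval ((a + 1, b) :: T))
          have key : sval ((a + 1, b) :: T) = sval ((a, b) :: T) + 1 := by
            rw [sval_cons, sval_cons]; omega
          rw [key]
          exact (hq _).mpr h4
        · apply Subtype.ext
          show f2 (0, (a + 1, b) :: T) = (0, (a, b) :: T)
          rw [f2_cons, if_pos (by omega)]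
          rfl
    | succ m' =>
      refine ⟨⟨(0, (m' + 2, m') :: L), ⟨⟨⟨?_, ?_, ?_⟩, ?_⟩, by omega⟩⟩, ?_⟩
      · show 0 + (m' + 2 + (List.map Prod.fst L).sum) = k
        omega
      · intro p hp
        rcases List.mem_cons.mp hp with rfl | hp
        · simp only; omega
        · exact h2 p hp
      · show sval ((m' + 2, m') :: L) ≤ d
        have h3' : sval L ≤ d - 1 := h3
        rw [sval_cons]
        omega
      · show q (sval ((m' + 2, m') :: L))
        have key : sval ((m' + 2, m') :: L) = sval L + 1 := by
          rw [sval_cons]; omega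
        rw [key]
        exact (hq _).mpr h4
      · apply Subtype.ext
        show f2 (0, (m' + 2, m') :: L) = (m' + 1, L)
        rw [f2_cons, if_neg (by omega)]
        rfl

include hq hk hd in
lemma card_rec :
    Nat.card {P : X // Pred k d P ∧ q (sval P.2)} =
      Nat.card {P : X // Pred (k - 1) d P ∧ q (sval P.2)} +
        Nat.card {P : X // Pred (k - 1) (d - 1) P ∧ q' (sval P.2)} := by
  rw [card_split (fun P : X => Pred k d P ∧ q (sval P.2)) (fun P => 1 ≤ P.1),
    cardA k d q (by omega), cardB k d q q' hq hk hd]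

end Rec


lemma card_congr_d (j d1 d2 : ℕ) (h1 : j ≤ d1) (h2 : j ≤ d2) (q : ℕ → Prop) :
    Nat.card {P : X // Pred j d1 P ∧ q (sval P.2)} =
      Nat.card {P : X // Pred j d2 P ∧ q (sval P.2)} := by
  refine Nat.card_congr (Equiv.subtypeEquivRight ?_)
  rintro ⟨m, L⟩
  have key : ∀ d, j ≤ d → (m + (L.map Prod.fst).sum = j → sval L ≤ d) := by
    intro d hd he
    have := sval_le L
    omega
  constructor
  · rintro ⟨⟨e1, e2, e3⟩, e4⟩; exact ⟨⟨e1, e2, key d2 h2 e1⟩, e4⟩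
  · rintro ⟨⟨e1, e2, e3⟩, e4⟩; exact ⟨⟨e1, e2, key d1 h1 e1⟩, e4⟩

lemma forced (m : ℕ) (L : List (ℕ × ℕ)) (h1 : m + (L.map Prod.fst).sum = 2)
    (h2 : ∀ p ∈ L, p.2 + 2 ≤ p.1) (hL : L ≠ []) : m = 0 ∧ L = [(2, 0)] := by
  cases L with
  | nil => exact absurd rfl hL
  | cons p T =>
    obtain ⟨a, b⟩ := p
    have hab : b + 2 ≤ a := h2 _ (List.mem_cons_self)
    simp only [List.map_cons, List.sum_cons] at h1
    have hT : (T.map Prod.fst).sum = 0 := by omega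
    have hTnil : T = [] := by
      cases T with
      | nil => rfl
      | cons c T' =>
        exfalso
        have hc := h2 c (List.mem_cons_of_mem _ (List.mem_cons_self))
        simp only [List.map_cons, List.sum_cons] at hT
        omega
    subst hTnil
    simp only [List.map_nil, List.sum_nil] at h1
    have ha : a = 2 := by omega
    have hb : b = 0 := by omega
    have hm : m = 0 := by omega
    subst ha; subst hb; subst hm
    exact ⟨rfl, rfl⟩

lemma base_odd : Nat.card {P : X // Pred 2 2 P ∧ Odd (sval P.2)} = 1 := by
  rw [Nat.card_eq_one_iff_exists]
  refine ⟨⟨(0, [(2, 0)]), ⟨⟨by simp, ?_, by simp⟩, by simp⟩⟩, ?_⟩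
  · rintro p hp
    rcases List.mem_cons.mp hp with rfl | hp
    · simp
    · simp at hp
  · rintro ⟨⟨m, L⟩, ⟨h1, h2, h3⟩, h4⟩
    apply Subtype.ext
    dsimp only at h1
    have hL : L ≠ [] := by
      rintro rfl
      simp [sval] at h4
    obtain ⟨hm, hLe⟩ := forced m L h1 h2 hL
    subst hm; subst hLe
    rfl

lemma base_even : Nat.card {P : X // Pred 2 2 P ∧ Even (sval P.2)} = 1 := by
  rw [Nat.card_eq_one_iff_exists]
  refine ⟨⟨(2, []), ⟨⟨by simp, by simp, by simp [sval]⟩, by simp [sval]⟩⟩, ?_⟩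
  rintro ⟨⟨m, L⟩, ⟨h1, h2, h3⟩, h4⟩
  apply Subtype.ext
  show (m, L) = ((2 : ℕ), ([] : List (ℕ × ℕ)))
  dsimp only at h1 h4
  cases L with
  | nil =>
    simp only [List.map_nil, List.sum_nil] at h1
    have : m = 2 := by omega
    subst this; rfl
  | cons p T =>
    exfalso
    obtain ⟨hm, hLe⟩ := forced m (p :: T) h1 h2 (by simp)
    rw [hLe] at h4
    have h5 : sval ([(2, 0)] : List (ℕ × ℕ)) = 1 := by simp
    rw [h5] at h4
    exact (Nat.not_even_iff_odd.mpr (by decide)) h4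

lemma hOE : ∀ n : ℕ, Odd (n + 1) ↔ Even n := fun n => by
  rw [Nat.odd_add_one, Nat.not_odd_iff_even]

lemma hEO : ∀ n : ℕ, Even (n + 1) ↔ Odd n := fun n => by
  rw [Nat.even_add_one, Nat.not_even_iff_odd]

lemma eval (k : ℕ) (hk : 2 ≤ k) :
    Nat.card {P : X // Pred k k P ∧ Odd (sval P.2)} = 2 ^ (k - 2) ∧
      Nat.card {P : X // Pred k k P ∧ Even (sval P.2)} = 2 ^ (k - 2) := by
  induction k, hk using Nat.le_induction with
  | base => simpa using ⟨base_odd, base_even⟩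
  | succ k hk ih =>
    obtain ⟨ih1, ih2⟩ := ih
    have ho := card_rec (k + 1) (k + 1) Odd Even hOE (by omega) (by omega)
    have he := card_rec (k + 1) (k + 1) Even Odd hEO (by omega) (by omega)
    rw [Nat.add_sub_cancel] at ho he
    rw [card_congr_d k (k + 1) k (by omega) le_rfl Odd] at ho
    rw [card_congr_d k (k + 1) k (by omega) le_rfl Even] at he
    have hp : (2 : ℕ) ^ (k - 2) + 2 ^ (k - 2) = 2 ^ (k + 1 - 2) := by
      have h2 : k + 1 - 2 = (k - 2) + 1 := by omega
      rw [h2, pow_succ]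
      ring
    constructor
    · rw [ho, ih1, ih2, hp]
    · rw [he, ih2, ih1, hp]

end Stmt18Aux


open Stmt18Aux in
/-- `Modd k d` counts tuples `(m, ((k₁,l₁),…,(k_n,l_n)))` with `m ≥ 0`,
`m + Σ k_u = k`, `k_u ≥ 2`, `k_u - 1 - l_u ≥ 1`, `Σ (k_u - 1 - l_u) ≤ d` and
that sum odd. -/
noncomputable def Modd (k d : ℕ) : ℕ :=
  Nat.card {P : ℕ × List (ℕ × ℕ) //
    P.1 + (P.2.map Prod.fst).sum = k ∧ (∀ p ∈ P.2, p.2 + 2 ≤ p.1) ∧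
    (P.2.map fun p => p.1 - 1 - p.2).sum ≤ d ∧ Odd (P.2.map fun p => p.1 - 1 - p.2).sum}

/-- Even counterpart of `Modd`. -/
noncomputable def Meven (k d : ℕ) : ℕ :=
  Nat.card {P : ℕ × List (ℕ × ℕ) //
    P.1 + (P.2.map Prod.fst).sum = k ∧ (∀ p ∈ P.2, p.2 + 2 ≤ p.1) ∧
    (P.2.map fun p => p.1 - 1 - p.2).sum ≤ d ∧ Even (P.2.map fun p => p.1 - 1 - p.2).sum}

lemma modd_eq (k d : ℕ) :
    Modd k d = Nat.card {P : Stmt18Aux.X // Stmt18Aux.Pred k d P ∧ Odd (Stmt18Aux.sval P.2)} := by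
  unfold Modd Stmt18Aux.Pred Stmt18Aux.sval
  exact Nat.card_congr (Equiv.subtypeEquivRight (fun P => by tauto))

lemma meven_eq (k d : ℕ) :
    Meven k d = Nat.card {P : Stmt18Aux.X // Stmt18Aux.Pred k d P ∧ Even (Stmt18Aux.sval P.2)} := by
  unfold Meven Stmt18Aux.Pred Stmt18Aux.sval
  exact Nat.card_congr (Equiv.subtypeEquivRight (fun P => by tauto))

/-- Recurrences for `|M^o_{k,d}|`, `|M^e_{k,d}|` and the evaluation
`|M^o_{k,k}| = |M^e_{k,k}| = 2^{k-2}` for `k ≥ 2`. -/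
theorem stmt18 :
    (∀ k d : ℕ, 2 ≤ k → 1 ≤ d →
      Modd k d = Modd (k - 1) d + Meven (k - 1) (d - 1) ∧
      Meven k d = Meven (k - 1) d + Modd (k - 1) (d - 1)) ∧
    (∀ k : ℕ, 2 ≤ k → Modd k k = 2 ^ (k - 2) ∧ Meven k k = 2 ^ (k - 2)) := by
  constructor
  · intro k d hk hd
    have ho := Stmt18Aux.card_rec k d Odd Even Stmt18Aux.hOE hk hd
    have he := Stmt18Aux.card_rec k d Even Odd Stmt18Aux.hEO hk hd
    constructor
    · rw [modd_eq, modd_eq, meven_eq, ho]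
    · rw [meven_eq, meven_eq, modd_eq, he]
  · intro k hk
    obtain ⟨h1, h2⟩ := Stmt18Aux.eval k hk
    exact ⟨by rw [modd_eq, h1], by rw [meven_eq, h2]⟩
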